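/- (a) For all real t, x one has tanh(x−t) − tanh(x+t) = −2·sinh(2t)/(cosh(2x) + cosh(2t)). (b) On the open set Ω = {(t,x) ∈ ℝ² : t ≠ 0}, the function u(t,x) = −2·sinh(2t)/(cosh(2x) + cosh(2t)) is nonvanishing and satisfies the fast diffusion equation u_t = ∂/∂x (u_x / u). -/

import Mathlib

/-- Partial derivative with respect to the first variable (time). -/
noncomputable def pt (u : ℝ × ℝ → ℝ) (p : ℝ × ℝ) : ℝ :=
  deriv (fun s => u (s, p.2)) p.1

/-- Partial derivative with respect to the second variable (space). -/
noncomputable def px (u : ℝ × ℝ → ℝ) (p : ℝ × ℝ) : ℝ :=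
  deriv (fun y => u (p.1, y)) p.2

lemma Dpos (t x : ℝ) : 0 < Real.cosh (2 * x) + Real.cosh (2 * t) := by
  have := Real.cosh_pos (x := 2 * x); have := Real.cosh_pos (x := 2 * t); linarith

lemma hasDerivAt_two_mul (x : ℝ) : HasDerivAt (fun y : ℝ => 2 * y) 2 x := by
  simpa using (hasDerivAt_id x).const_mul 2

lemma hasDerivAt_sinh2 (x : ℝ) :
    HasDerivAt (fun y : ℝ => Real.sinh (2 * y)) (2 * Real.cosh (2 * x)) x := by
  have h := (hasDerivAt_two_mul x).sinh
  convert h using 1; ring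

lemma hasDerivAt_cosh2 (x : ℝ) :
    HasDerivAt (fun y : ℝ => Real.cosh (2 * y)) (2 * Real.sinh (2 * x)) x := by
  have h := (hasDerivAt_two_mul x).cosh
  convert h using 1; ring

/-- derivative in x of u(t,x) = -2 sinh(2t)/(cosh 2x + cosh 2t) -/
lemma hasDerivAt_u_x (t x : ℝ) :
    HasDerivAt (fun y : ℝ => -2 * Real.sinh (2 * t) / (Real.cosh (2 * y) + Real.cosh (2 * t)))
      (4 * Real.sinh (2 * t) * Real.sinh (2 * x) /
        (Real.cosh (2 * x) + Real.cosh (2 * t)) ^ 2) x := by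
  have hden : HasDerivAt (fun y : ℝ => Real.cosh (2 * y) + Real.cosh (2 * t))
      (2 * Real.sinh (2 * x)) x := (hasDerivAt_cosh2 x).add_const _
  have h := (hasDerivAt_const x (-2 * Real.sinh (2 * t))).div hden (Dpos t x).ne'
  refine h.congr_deriv ?_
  field_simp
  ring

/-- derivative in t of u(t,x) -/
lemma hasDerivAt_u_t (t x : ℝ) :
    HasDerivAt (fun s : ℝ => -2 * Real.sinh (2 * s) / (Real.cosh (2 * x) + Real.cosh (2 * s)))
      ((-4 * Real.cosh (2 * t) * (Real.cosh (2 * x) + Real.cosh (2 * t))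
        + 4 * Real.sinh (2 * t) ^ 2) / (Real.cosh (2 * x) + Real.cosh (2 * t)) ^ 2) t := by
  have hnum : HasDerivAt (fun s : ℝ => -2 * Real.sinh (2 * s)) (-2 * (2 * Real.cosh (2 * t))) t :=
    (hasDerivAt_sinh2 t).const_mul (-2)
  have hden : HasDerivAt (fun s : ℝ => Real.cosh (2 * x) + Real.cosh (2 * s))
      (2 * Real.sinh (2 * t)) t := (hasDerivAt_cosh2 t).const_add _
  have h := hnum.div hden (Dpos t x).ne'
  refine h.congr_deriv ?_
  ring

/-- derivative in x of v(x) = -2 sinh(2x)/(cosh 2x + cosh 2t) -/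
lemma hasDerivAt_v (t x : ℝ) :
    HasDerivAt (fun y : ℝ => -2 * Real.sinh (2 * y) / (Real.cosh (2 * y) + Real.cosh (2 * t)))
      ((-4 * Real.cosh (2 * x) * (Real.cosh (2 * x) + Real.cosh (2 * t))
        + 4 * Real.sinh (2 * x) ^ 2) / (Real.cosh (2 * x) + Real.cosh (2 * t)) ^ 2) x := by
  have hnum : HasDerivAt (fun y : ℝ => -2 * Real.sinh (2 * y)) (-2 * (2 * Real.cosh (2 * x))) x :=
    (hasDerivAt_sinh2 x).const_mul (-2)
  have hden : HasDerivAt (fun y : ℝ => Real.cosh (2 * y) + Real.cosh (2 * t))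
      (2 * Real.sinh (2 * x)) x := (hasDerivAt_cosh2 x).add_const _
  have h := hnum.div hden (Dpos t x).ne'
  refine h.congr_deriv ?_
  ring

/-- The non-Lie exact solution
`u = tanh(x−t) − tanh(x+t) = −2 sinh(2t)/(cosh(2x) + cosh(2t))`
of the fast diffusion equation `u_t = ∂/∂x (u_x / u)`. -/
theorem fast_diffusion_solution_tanh
    (u : ℝ × ℝ → ℝ)
    (hu : u = fun p =>
      -2 * Real.sinh (2 * p.1) / (Real.cosh (2 * p.2) + Real.cosh (2 * p.1)))
    (Ω : Set (ℝ × ℝ)) (hΩ : Ω = {p : ℝ × ℝ | p.1 ≠ 0}) :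
    (∀ t x : ℝ, Real.tanh (x - t) - Real.tanh (x + t) =
      -2 * Real.sinh (2 * t) / (Real.cosh (2 * x) + Real.cosh (2 * t))) ∧
    (∀ p ∈ Ω, u p ≠ 0 ∧ pt u p = px (fun q => px u q / u q) p) := by
  constructor
  · intro t x
    have h1 : Real.cosh (x - t) ≠ 0 := (Real.cosh_pos _).ne'
    have h2 : Real.cosh (x + t) ≠ 0 := (Real.cosh_pos _).ne'
    have h3 : Real.cosh (2 * x) + Real.cosh (2 * t) ≠ 0 := (Dpos t x).ne'
    rw [Real.tanh_eq_sinh_div_cosh, Real.tanh_eq_sinh_div_cosh,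
      div_sub_div _ _ h1 h2, div_eq_div_iff (by positivity) h3]
    have ex : (2 : ℝ) * x = x + x := by ring
    have et : (2 : ℝ) * t = t + t := by ring
    have hx := Real.cosh_sq_sub_sinh_sq x
    have ht := Real.cosh_sq_sub_sinh_sq t
    rw [ex, et, Real.cosh_add, Real.cosh_add, Real.sinh_add,
      Real.sinh_sub, Real.sinh_add, Real.cosh_sub, Real.cosh_add]
    linear_combination (-2 * Real.cosh t * Real.sinh t * (Real.cosh x ^ 2 + Real.sinh x ^ 2)) * hx
      + (2 * Real.cosh t * Real.sinh t * (Real.cosh x ^ 2 + Real.sinh x ^ 2)) * ht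
  · rintro ⟨t, x⟩ hp
    rw [hΩ] at hp
    have ht : t ≠ 0 := hp
    have hS : Real.sinh (2 * t) ≠ 0 := by
      simpa using Real.sinh_ne_zero.mpr (by simpa using (mul_ne_zero two_ne_zero ht))
    have hD : ∀ y, (0:ℝ) < Real.cosh (2 * y) + Real.cosh (2 * t) := fun y => Dpos t y
    have hune : ∀ y, u (t, y) ≠ 0 := by
      intro y
      rw [hu]
      simp only
      exact div_ne_zero (by simpa using hS) (hD y).ne'
    refine ⟨hune x, ?_⟩
    -- px u (t, y) computation
    have hpx : ∀ y, px u (t, y) = 4 * Real.sinh (2 * t) * Real.sinh (2 * y) /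
        (Real.cosh (2 * y) + Real.cosh (2 * t)) ^ 2 := by
      intro y
      unfold px
      rw [hu]
      exact (hasDerivAt_u_x t y).deriv
    -- ratio simplification
    have hratio : ∀ y, px u (t, y) / u (t, y) =
        -2 * Real.sinh (2 * y) / (Real.cosh (2 * y) + Real.cosh (2 * t)) := by
      intro y
      rw [hpx y, hu]
      simp only
      rw [div_eq_div_iff (by positivity) (hD y).ne']
      field_simp
      ring
    have hRHS : px (fun q : ℝ × ℝ => px u q / u q) (t, x) =
        (-4 * Real.cosh (2 * x) * (Real.cosh (2 * x) + Real.cosh (2 * t))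
          + 4 * Real.sinh (2 * x) ^ 2) / (Real.cosh (2 * x) + Real.cosh (2 * t)) ^ 2 := by
      show deriv (fun y => px u (t, y) / u (t, y)) x = _
      have heq : (fun y => px u (t, y) / u (t, y)) =
          fun y => -2 * Real.sinh (2 * y) / (Real.cosh (2 * y) + Real.cosh (2 * t)) :=
        funext hratio
      rw [heq]
      exact (hasDerivAt_v t x).deriv
    have hLHS : pt u (t, x) =
        (-4 * Real.cosh (2 * t) * (Real.cosh (2 * x) + Real.cosh (2 * t))
          + 4 * Real.sinh (2 * t) ^ 2) / (Real.cosh (2 * x) + Real.cosh (2 * t)) ^ 2 := by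
      unfold pt
      rw [hu]
      exact (hasDerivAt_u_t t x).deriv
    rw [hLHS, hRHS]
    have hx2 := Real.cosh_sq_sub_sinh_sq (2 * x)
    have ht2 := Real.cosh_sq_sub_sinh_sq (2 * t)
    congr 1
    nlinarith [hx2, ht2]
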